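/- For every n ≥ 3, the function f : ℝ^n → ℝ defined by f(x) = max{0, x_1, x_2, …, x_{n-3}, max{x_{n-2}, x_{n-1}} + max{0, x_n}} is not contained in MAX_n(n); that is, f cannot be written as a finite linear combination of maxima of at most n affine functions. In particular, MAX_n(n) is a strict subset of CPWL_n. -/

import Mathlib

/-- A polyhedron: a finite intersection of closed halfspaces. -/
def IsPolyhedron {n : ℕ} (P : Set (Fin n → ℝ)) : Prop :=
  ∃ (m : ℕ) (A : Fin m → Fin n → ℝ) (b : Fin m → ℝ),
    P = {x | ∀ i, ∑ j, A i j * x j ≤ b i}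

/-- `f ∈ CPWL_n`: `f` is continuous and there are finitely many polyhedra covering `ℝⁿ`
such that `f` is affine on each of them. -/
def IsCPWL {n : ℕ} (f : (Fin n → ℝ) → ℝ) : Prop :=
  Continuous f ∧ ∃ (N : ℕ) (P : Fin N → Set (Fin n → ℝ)),
    (∀ i, IsPolyhedron (P i)) ∧ (⋃ i, P i) = Set.univ ∧
    ∀ i, ∃ (a : Fin n → ℝ) (c : ℝ), ∀ x ∈ P i, f x = (∑ j, a j * x j) + c

/-- Maximum of `v` over a finite set `S` (junk value `0` if `S = ∅`). -/
noncomputable def maxOverSet {ι : Type*} (S : Finset ι) (v : ι → ℝ) : ℝ :=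
  if h : S.Nonempty then S.sup' h v else 0

/-- `f ∈ MAX_n(p)`: `f` is a finite linear combination of maxima of (at most) `p`
affine functions. -/
def InMAX (n p : ℕ) (f : (Fin n → ℝ) → ℝ) : Prop :=
  ∃ (N : ℕ) (lam : Fin N → ℝ) (a : Fin N → Fin p → Fin n → ℝ) (b : Fin N → Fin p → ℝ),
    ∀ x, f x = ∑ j, lam j * maxOverSet Finset.univ (fun i => (∑ t, a j i t * x t) + b j i)

namespace M11

variable {n : ℕ}

def dot (a x : Fin n → ℝ) : ℝ := ∑ t, a t * x t

lemma dot_add_smul (a y c : Fin n → ℝ) (t : ℝ) :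
    dot a (y + t • c) = dot a y + t * dot a c := by
  unfold dot
  rw [Finset.mul_sum, ← Finset.sum_add_distrib]
  refine Finset.sum_congr rfl fun s _ => ?_
  simp [smul_eq_mul]; ring

lemma dot_neg (a c : Fin n → ℝ) : dot a (-c) = -dot a c := by
  unfold dot; rw [← Finset.sum_neg_distrib]
  refine Finset.sum_congr rfl fun s _ => ?_; simp

lemma dot_zero (a : Fin n → ℝ) : dot a 0 = 0 := by simp [dot]

structure Term (n : ℕ) where
  p : ℕ
  S : Finset (Fin p)
  hS : S.Nonempty
  a : Fin p → Fin n → ℝ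
  b : Fin p → ℝ
  lam : ℝ

noncomputable def Term.eval (τ : Term n) (x : Fin n → ℝ) : ℝ :=
  τ.lam * τ.S.sup' τ.hS (fun i => dot (τ.a i) x + τ.b i)

noncomputable def Term.M (τ : Term n) (c : Fin n → ℝ) : ℝ :=
  τ.S.sup' τ.hS (fun i => dot (τ.a i) c)

noncomputable def Term.top (τ : Term n) (c : Fin n → ℝ) : Finset (Fin τ.p) :=
  haveI := Classical.dec
  τ.S.filter (fun i => dot (τ.a i) c = τ.M c)

lemma Term.top_subset (τ : Term n) (c : Fin n → ℝ) : τ.top c ⊆ τ.S :=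
  Finset.filter_subset _ _

lemma Term.mem_top {τ : Term n} {c : Fin n → ℝ} {i : Fin τ.p} :
    i ∈ τ.top c ↔ i ∈ τ.S ∧ dot (τ.a i) c = τ.M c := by
  classical
  simp [Term.top]

lemma Term.top_nonempty (τ : Term n) (c : Fin n → ℝ) : (τ.top c).Nonempty := by
  obtain ⟨i, hi, hie⟩ := Finset.exists_mem_eq_sup' τ.hS (fun i => dot (τ.a i) c)
  exact ⟨i, Term.mem_top.2 ⟨hi, hie.symm⟩⟩

noncomputable def Term.topT (τ : Term n) (c : Fin n → ℝ) : Term n :=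
  ⟨τ.p, τ.top c, τ.top_nonempty c, τ.a, τ.b, τ.lam⟩

lemma add_sup' {ι : Type*} (A : ℝ) (s : Finset ι) (h : s.Nonempty) (f : ι → ℝ) :
    A + s.sup' h f = s.sup' h (fun i => A + f i) :=
  Finset.comp_sup'_eq_sup'_comp h (fun z => A + z)
    (fun x y => by exact (max_add_add_left _ _ _).symm)

lemma Term.dot_le_M (τ : Term n) (c : Fin n → ℝ) {i : Fin τ.p} (hi : i ∈ τ.S) :
    dot (τ.a i) c ≤ τ.M c := by unfold Term.M; exact Finset.le_sup' (fun i => dot (τ.a i) c) hi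

/-- Eventual affineness of a max-term along a ray. -/
lemma Term.eval_eventually (τ : Term n) (c y : Fin n → ℝ) :
    ∃ T : ℝ, ∀ t ≥ T, τ.eval (y + t • c) = t * (τ.lam * τ.M c) + (τ.topT c).eval y := by
  classical
  obtain ⟨i0, hi0e⟩ := τ.top_nonempty c
  rw [Term.mem_top] at hi0e
  set T : ℝ := τ.S.sup' τ.hS (fun i => if dot (τ.a i) c = τ.M c then 0 else
      (dot (τ.a i) y + τ.b i - dot (τ.a i0) y - τ.b i0) / (τ.M c - dot (τ.a i) c)) with hT
  refine ⟨T, fun t ht => ?_⟩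
  have key : τ.S.sup' τ.hS (fun i => dot (τ.a i) (y + t • c) + τ.b i)
      = t * τ.M c + (τ.top c).sup' (τ.top_nonempty c) (fun i => dot (τ.a i) y + τ.b i) := by
    apply le_antisymm
    · apply Finset.sup'_le
      intro i hiS
      rw [dot_add_smul]
      by_cases hi : dot (τ.a i) c = τ.M c
      · have h1 : dot (τ.a i) y + τ.b i ≤
            (τ.top c).sup' (τ.top_nonempty c) (fun i => dot (τ.a i) y + τ.b i) :=
          Finset.le_sup' (fun i => dot (τ.a i) y + τ.b i) (Term.mem_top.2 ⟨hiS, hi⟩)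
        rw [hi]; linarith
      · have hlt : dot (τ.a i) c < τ.M c := lt_of_le_of_ne (τ.dot_le_M c hiS) hi
        have hTi : (dot (τ.a i) y + τ.b i - dot (τ.a i0) y - τ.b i0) / (τ.M c - dot (τ.a i) c)
            ≤ T := by
          have := Finset.le_sup' (f := fun i => if dot (τ.a i) c = τ.M c then (0:ℝ) else
              (dot (τ.a i) y + τ.b i - dot (τ.a i0) y - τ.b i0) / (τ.M c - dot (τ.a i) c)) hiS
          rw [if_neg hi] at this
          exact this
        have hnum : dot (τ.a i) y + τ.b i - dot (τ.a i0) y - τ.b i0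
            ≤ t * (τ.M c - dot (τ.a i) c) := by
          have h2 : (dot (τ.a i) y + τ.b i - dot (τ.a i0) y - τ.b i0) / (τ.M c - dot (τ.a i) c)
              ≤ t := le_trans hTi ht
          exact (div_le_iff₀ (by linarith)).mp h2
        have h3 : dot (τ.a i0) y + τ.b i0 ≤
            (τ.top c).sup' (τ.top_nonempty c) (fun i => dot (τ.a i) y + τ.b i) :=
          Finset.le_sup' (fun i => dot (τ.a i) y + τ.b i) (Term.mem_top.2 hi0e)
        nlinarith [hnum, h3]
    · rw [add_sup']
      apply Finset.sup'_le
      intro i hi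
      rw [Term.mem_top] at hi
      have : dot (τ.a i) (y + t • c) + τ.b i ≤
          τ.S.sup' τ.hS (fun i => dot (τ.a i) (y + t • c) + τ.b i) :=
        Finset.le_sup' (fun i => dot (τ.a i) (y + t • c) + τ.b i) hi.1
      rw [dot_add_smul, hi.2] at this
      linarith
  unfold Term.eval Term.topT
  simp only []
  rw [key]
  ring


noncomputable def lsum (L : List (Term n)) (x : Fin n → ℝ) : ℝ :=
  (L.map (fun τ => τ.eval x)).sum

@[simp] lemma lsum_nil (x : Fin n → ℝ) : lsum ([] : List (Term n)) x = 0 := rfl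

@[simp] lemma lsum_cons (τ : Term n) (L : List (Term n)) (x : Fin n → ℝ) :
    lsum (τ :: L) x = τ.eval x + lsum L x := by simp [lsum]

@[simp] lemma lsum_append (L L' : List (Term n)) (x : Fin n → ℝ) :
    lsum (L ++ L') x = lsum L x + lsum L' x := by simp [lsum]

lemma lsum_eventually (L : List (Term n)) (c y : Fin n → ℝ) :
    ∃ T : ℝ, ∀ t ≥ T, lsum L (y + t • c)
      = t * (L.map (fun τ => τ.lam * τ.M c)).sum + lsum (L.map (fun τ => τ.topT c)) y := by
  induction L with
  | nil => exact ⟨0, fun t _ => by simp⟩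
  | cons τ L ih =>
      obtain ⟨T1, h1⟩ := τ.eval_eventually c y
      obtain ⟨T2, h2⟩ := ih
      refine ⟨max T1 T2, fun t ht => ?_⟩
      rw [lsum_cons, h1 t (le_trans (le_max_left _ _) ht), h2 t (le_trans (le_max_right _ _) ht)]
      simp [lsum]
      ring

/-- Extraction: from a vanishing combination, the "top faces" combination vanishes too. -/
lemma top_rel (L : List (Term n)) (h : ∀ x, lsum L x = 0) (c : Fin n → ℝ) :
    ∀ y, lsum (L.map (fun τ => τ.topT c)) y = 0 := by
  intro y
  obtain ⟨T, hT⟩ := lsum_eventually L c y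
  set A := (L.map (fun τ => τ.lam * τ.M c)).sum with hA
  set B := lsum (L.map (fun τ => τ.topT c)) y with hB
  have e1 : (max T 0 + 1) * A + B = 0 := by
    rw [← hT (max T 0 + 1) (by have := le_max_left T 0; linarith), h]
  have e2 : (max T 0 + 2) * A + B = 0 := by
    rw [← hT (max T 0 + 2) (by have := le_max_left T 0; linarith), h]
  have : A = 0 := by linarith
  rw [this] at e1; linarith

def Term.flat (τ : Term n) (c : Fin n → ℝ) : Prop :=
  ∀ i ∈ τ.S, dot (τ.a i) c = τ.M c

lemma Term.flat_top_eq (τ : Term n) {c : Fin n → ℝ} (h : τ.flat c) : τ.top c = τ.S := by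
  apply Finset.Subset.antisymm (τ.top_subset c)
  intro i hi
  exact Term.mem_top.2 ⟨hi, h i hi⟩

lemma Term.M_neg_of_flat (τ : Term n) {c : Fin n → ℝ} (h : τ.flat c) : τ.M (-c) = -τ.M c := by
  unfold Term.M
  have : ∀ i ∈ τ.S, dot (τ.a i) (-c) = -τ.M c := fun i hi => by rw [dot_neg, h i hi]
  rw [Finset.sup'_congr τ.hS rfl this, Finset.sup'_const]
  rfl

lemma Term.flat_neg (τ : Term n) {c : Fin n → ℝ} (h : τ.flat c) : τ.flat (-c) := by
  intro i hi
  rw [dot_neg, h i hi, τ.M_neg_of_flat h]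

/-- For a flat term, top and bottom coincide. -/
lemma Term.flat_topT_eval (τ : Term n) {c : Fin n → ℝ} (h : τ.flat c) (x : Fin n → ℝ) :
    (τ.topT (-c)).eval x = (τ.topT c).eval x := by
  have e : τ.top (-c) = τ.top c := by
    rw [τ.flat_top_eq h, τ.flat_top_eq (τ.flat_neg h)]
  unfold Term.topT Term.eval
  simp only []
  congr 1
  exact Finset.sup'_congr (τ.top_nonempty (-c)) e (fun _ _ => rfl)

/-- For a non-flat term, top and bottom are disjoint. -/
lemma Term.nonflat_disjoint (τ : Term n) {c : Fin n → ℝ} (h : ¬ τ.flat c) :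
    Disjoint (τ.top c) (τ.top (-c)) := by
  rw [Finset.disjoint_left]
  intro i hi1 hi2
  rw [Term.mem_top] at hi1 hi2
  apply h
  intro j hj
  have h1 : dot (τ.a j) c ≤ τ.M c := τ.dot_le_M c hj
  have h2 : dot (τ.a j) (-c) ≤ τ.M (-c) := τ.dot_le_M (-c) hj
  rw [dot_neg] at h2
  have h3 : τ.M (-c) = -dot (τ.a i) c := by rw [← hi2.2, dot_neg]
  rw [hi1.2] at h3
  linarith [h1, h2, h3 ▸ h2]

lemma Term.nonflat_card {τ : Term n} {c : Fin n → ℝ} (h : ¬ τ.flat c) {m : ℕ}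
    (hm : τ.S.card ≤ m) :
    (τ.top c).card ≤ m - 1 ∧ (τ.top (-c)).card ≤ m - 1 := by
  have hd := τ.nonflat_disjoint h
  have hsub : τ.top c ∪ τ.top (-c) ⊆ τ.S :=
    Finset.union_subset (τ.top_subset c) (τ.top_subset (-c))
  have hcard : (τ.top c).card + (τ.top (-c)).card ≤ τ.S.card := by
    rw [← Finset.card_union_of_disjoint hd]
    exact Finset.card_le_card hsub
  have h1 : 1 ≤ (τ.top c).card := Finset.card_pos.2 (τ.top_nonempty c)
  have h2 : 1 ≤ (τ.top (-c)).card := Finset.card_pos.2 (τ.top_nonempty (-c))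
  omega


def RepL (n m : ℕ) (F : (Fin n → ℝ) → ℝ) : Prop :=
  ∃ L : List (Term n), (∀ τ ∈ L, τ.S.card ≤ m) ∧ ∀ x, F x = lsum L x

noncomputable def dummy (n : ℕ) : Term n := ⟨1, Finset.univ, Finset.univ_nonempty, 0, 0, 0⟩

@[simp] lemma dummy_eval (x : Fin n → ℝ) : (dummy n).eval x = 0 := by
  simp [dummy, Term.eval]

open Classical in
/-- bottom term, with flat terms replaced by dummies -/
noncomputable def botD (c : Fin n → ℝ) (τ : Term n) : Term n :=
  if τ.flat c then dummy n else τ.topT (-c)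

open Classical in
noncomputable def topD (c : Fin n → ℝ) (τ : Term n) : Term n :=
  if τ.flat c then dummy n else ⟨τ.p, τ.top c, τ.top_nonempty c, τ.a, τ.b, -τ.lam⟩

lemma eval_neg_lam (τ : Term n) (x : Fin n → ℝ) :
    Term.eval ⟨τ.p, τ.S, τ.hS, τ.a, τ.b, -τ.lam⟩ x = -τ.eval x := by
  simp [Term.eval]

lemma botD_topD_sum (c : Fin n → ℝ) (L : List (Term n)) (x : Fin n → ℝ) :
    lsum (L.map (botD c)) x + lsum (L.map (topD c)) x
      = lsum (L.map (fun τ => τ.topT (-c))) x - lsum (L.map (fun τ => τ.topT c)) x := by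
  classical
  induction L with
  | nil => simp
  | cons τ L ih =>
      simp only [List.map_cons, lsum_cons]
      by_cases hfl : τ.flat c
      · rw [botD, topD, if_pos hfl, if_pos hfl, τ.flat_topT_eval hfl x]
        simp only [dummy_eval]
        linarith [ih]
      · rw [botD, topD, if_neg hfl, if_neg hfl]
        have : Term.eval ⟨τ.p, τ.top c, τ.top_nonempty c, τ.a, τ.b, -τ.lam⟩ x
            = -(τ.topT c).eval x := eval_neg_lam (τ.topT c) x
        rw [this]
        linarith [ih]

/-- The key step lemma: one face-taking step. -/
lemma step (m : ℕ) (G : Term n) (hGlam : G.lam = 1) (c : Fin n → ℝ)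
    (h : RepL n m G.eval) :
    RepL n (max (m - 1) ((G.top c).card)) (G.topT (-c)).eval := by
  classical
  obtain ⟨L, hcard, hsum⟩ := h
  set Gneg : Term n := ⟨G.p, G.S, G.hS, G.a, G.b, -G.lam⟩ with hGneg
  have hGnegeval : ∀ x, Gneg.eval x = -G.eval x := fun x => eval_neg_lam G x
  have hrel : ∀ x, lsum (Gneg :: L) x = 0 := by
    intro x
    rw [lsum_cons, hGnegeval, ← hsum x]
    ring
  have htopc := top_rel (Gneg :: L) hrel c
  have htopnc := top_rel (Gneg :: L) hrel (-c)
  -- Gneg's top term evals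
  have hGtop : ∀ x, (Gneg.topT c).eval x = -((G.topT c).eval x) := by
    intro x
    unfold Term.topT Term.eval Term.top Term.M
    simp only [hGneg]
    rw [neg_mul]
  have hGbot : ∀ x, (Gneg.topT (-c)).eval x = -((G.topT (-c)).eval x) := by
    intro x
    unfold Term.topT Term.eval Term.top Term.M
    simp only [hGneg]
    rw [neg_mul]
  have htopc' : ∀ x, lsum (L.map (fun τ => τ.topT c)) x = (G.topT c).eval x := by
    intro x
    have := htopc x
    rw [List.map_cons, lsum_cons, hGtop] at this
    linarith
  have hbotc' : ∀ x, lsum (L.map (fun τ => τ.topT (-c))) x = (G.topT (-c)).eval x := by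
    intro x
    have := htopnc x
    rw [List.map_cons, lsum_cons, hGbot] at this
    linarith
  refine ⟨G.topT c :: (L.map (botD c) ++ L.map (topD c)), ?_, ?_⟩
  · intro τ hτ
    rcases List.mem_cons.1 hτ with h1 | h1
    · subst h1
      exact le_max_of_le_right (le_refl _)
    · have hm1 : τ.S.card ≤ m - 1 → τ.S.card ≤ max (m - 1) ((G.top c).card) :=
        fun h => le_max_of_le_left h
      have hd : (dummy n).S.card = 1 := by simp [dummy]
      have hG1 : 1 ≤ (G.top c).card := Finset.card_pos.2 (G.top_nonempty c)
      rcases List.mem_append.1 h1 with h2 | h2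
      · obtain ⟨σ, hσL, hσ⟩ := List.mem_map.1 h2
        by_cases hfl : σ.flat c
        · rw [← hσ, botD, if_pos hfl]
          rw [show (dummy n).S.card = 1 from by simp [dummy]]
          exact le_max_of_le_right hG1
        · rw [← hσ, botD, if_neg hfl]
          exact le_max_of_le_left (Term.nonflat_card hfl (hcard σ hσL)).2
      · obtain ⟨σ, hσL, hσ⟩ := List.mem_map.1 h2
        by_cases hfl : σ.flat c
        · rw [← hσ, topD, if_pos hfl]
          rw [show (dummy n).S.card = 1 from by simp [dummy]]
          exact le_max_of_le_right hG1
        · rw [← hσ, topD, if_neg hfl]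
          exact le_max_of_le_left (Term.nonflat_card hfl (hcard σ hσL)).1
  · intro x
    rw [lsum_cons, lsum_append]
    have := botD_topD_sum c L x
    rw [htopc' x, hbotc' x] at this
    linarith


def unitv (n : ℕ) (k : ℕ) : Fin n → ℝ := fun t => if (t : ℕ) = k then 1 else 0

lemma sum_ite_coord (k : ℕ) (hk : k < n) (x : Fin n → ℝ) :
    ∑ t : Fin n, (if (t : ℕ) = k then (1:ℝ) else 0) * x t = x ⟨k, hk⟩ := by
  rw [Finset.sum_eq_single ⟨k, hk⟩]
  · simp
  · intro t _ ht
    have : (t : ℕ) ≠ k := fun h => ht (Fin.ext h)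
    simp [this]
  · intro h
    exact absurd (Finset.mem_univ _) h

lemma dot_unitv (k : ℕ) (hk : k < n) (x : Fin n → ℝ) :
    dot (unitv n k) x = x ⟨k, hk⟩ := by
  unfold dot unitv
  exact sum_ite_coord k hk x

def avec (n : ℕ) (k : ℕ) : Fin n → ℝ := fun t => if (t : ℕ) + 1 = k then 1 else 0

lemma dot_avec_zero (x : Fin n → ℝ) : dot (avec n 0) x = 0 := by
  unfold dot avec; simp

lemma dot_avec_succ (k : ℕ) (hk : k < n) (x : Fin n → ℝ) :
    dot (avec n (k + 1)) x = x ⟨k, hk⟩ := by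
  unfold dot avec
  rw [← sum_ite_coord k hk x]
  refine Finset.sum_congr rfl fun t _ => ?_
  congr 1
  simp [Nat.succ_inj]

/-- The simplex function `max(0, x₀, …, x_{m-1})` as a term. -/
@[reducible]
noncomputable def smT (n m : ℕ) : Term n :=
  ⟨m + 1, Finset.univ, Finset.univ_nonempty, fun i => avec n (i : ℕ), 0, 1⟩

lemma smT_eval (m : ℕ) (x : Fin n → ℝ) :
    (smT n m).eval x = Finset.univ.sup' Finset.univ_nonempty
      (fun i : Fin (m + 1) => dot (avec n (i : ℕ)) x) := by
  unfold smT Term.eval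
  simp only [one_mul]
  refine Finset.sup'_congr _ rfl fun i _ => by simp

/-- values of the pieces of `smT` in direction `unitv k`, for `k + 1 ≤ m` stage. -/
lemma dot_avec_unitv (j k : ℕ) (hk : k < n) :
    dot (avec n j) (unitv n k) = if j = k + 1 then 1 else 0 := by
  rcases j with _ | j
  · rw [dot_avec_zero]; simp
  · by_cases hj : j < n
    · rw [dot_avec_succ j hj]
      unfold unitv
      by_cases h : j = k
      · subst h; simp
      · have : ((⟨j, hj⟩ : Fin n) : ℕ) ≠ k := h
        simp [this, fun hh : j + 1 = k + 1 => h (Nat.succ_injective hh)]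
    · have : ∀ t : Fin n, (t : ℕ) + 1 ≠ j + 1 := by
        intro t hh
        exact hj (Nat.succ_injective hh ▸ t.isLt)
      have hz : dot (avec n (j+1)) (unitv n k) = 0 := by
        unfold dot avec
        apply Finset.sum_eq_zero
        intro t _
        rw [if_neg (this t), zero_mul]
      rw [hz]
      have : j + 1 ≠ k + 1 := by
        intro hh
        exact hj (Nat.succ_injective hh ▸ hk)
      rw [if_neg this]

lemma smT_M (m k : ℕ) (hm : m = k + 1) (hk : k < n) :
    (smT n m).M (unitv n k) = 1 := by
  subst hm
  unfold Term.M smT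
  simp only []
  apply le_antisymm
  · apply Finset.sup'_le
    intro i _
    rw [dot_avec_unitv _ k hk]
    split <;> norm_num
  · have hmem : (⟨k + 1, by omega⟩ : Fin (k + 1 + 1)) ∈ Finset.univ := Finset.mem_univ _
    have := Finset.le_sup' (fun i : Fin (k+1+1) => dot (avec n (i : ℕ)) (unitv n k)) hmem
    rw [dot_avec_unitv _ k hk] at this
    exact le_trans (by simp) this

lemma smT_top (m k : ℕ) (hm : m = k + 1) (hk : k < n) :
    (smT n m).top (unitv n k) = ({⟨k + 1, by omega⟩} : Finset (Fin (m + 1))) := by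
  subst hm
  ext i
  rw [Term.mem_top, smT_M (k+1) k rfl hk]
  unfold smT
  simp only [Finset.mem_univ, true_and, Finset.mem_singleton]
  rw [dot_avec_unitv _ k hk]
  constructor
  · intro h
    have : (i : ℕ) = k + 1 := by
      by_contra hne
      rw [if_neg hne] at h
      norm_num at h
    exact Fin.ext this
  · intro h
    subst h
    simp

lemma smT_M_neg (m k : ℕ) (hm : m = k + 1) (hk : k < n) :
    (smT n m).M (-(unitv n k)) = 0 := by
  subst hm
  unfold Term.M smT
  simp only []
  apply le_antisymm
  · apply Finset.sup'_le
    intro i _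
    rw [dot_neg, dot_avec_unitv _ k hk]
    split <;> norm_num
  · have hmem : (⟨0, by omega⟩ : Fin (k + 1 + 1)) ∈ Finset.univ := Finset.mem_univ _
    have := Finset.le_sup' (fun i : Fin (k+1+1) => dot (avec n (i : ℕ)) (-(unitv n k))) hmem
    rw [dot_neg, dot_avec_unitv _ k hk] at this
    exact le_trans (by simp) this


lemma smT_mem_bot (k : ℕ) (hk : k < n) (i : Fin (k + 1 + 1)) :
    i ∈ (smT n (k+1)).top (-(unitv n k)) ↔ (i : ℕ) ≠ k + 1 := by
  rw [Term.mem_top, smT_M_neg (k+1) k rfl hk]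
  unfold smT
  simp only [Finset.mem_univ, true_and]
  rw [dot_neg, dot_avec_unitv _ k hk]
  by_cases h : (i : ℕ) = k + 1
  · simp [h]
  · simp [h]

lemma smT_bot_eval (k : ℕ) (hk : k < n) (x : Fin n → ℝ) :
    ((smT n (k+1)).topT (-(unitv n k))).eval x = (smT n k).eval x := by
  rw [smT_eval]
  unfold Term.topT Term.eval
  simp only []
  have hlam : (smT n (k+1)).lam = 1 := rfl
  rw [hlam, one_mul]
  apply le_antisymm
  · apply Finset.sup'_le
    intro i hi
    have hi' : (i : ℕ) ≠ k + 1 := (smT_mem_bot k hk i).1 hi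
    have hile : (i : ℕ) < k + 1 := by
      have h2 : (i : ℕ) < k + 1 + 1 := i.isLt
      omega
    have hmem : (⟨(i : ℕ), hile⟩ : Fin (k + 1)) ∈ Finset.univ := Finset.mem_univ _
    have hle := Finset.le_sup' (fun j : Fin (k + 1) => dot (avec n (j : ℕ)) x) hmem
    have hb : (smT n (k+1)).b i = 0 := rfl
    have ha : (smT n (k+1)).a i = avec n (i : ℕ) := rfl
    rw [Pi.zero_apply, add_zero]
    exact hle
  · apply Finset.sup'_le
    intro j _
    have hjle : (j : ℕ) < k + 1 + 1 := by omega
    have hmem : (⟨(j : ℕ), hjle⟩ : Fin (k + 1 + 1)) ∈ (smT n (k+1)).top (-(unitv n k)) := by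
      rw [smT_mem_bot k hk]
      simp only []
      omega
    have hle := Finset.le_sup'
      (fun i : Fin (k+1+1) => dot ((smT n (k+1)).a i) x + (smT n (k+1)).b i) hmem
    have hb : (smT n (k+1)).b ⟨(j : ℕ), hjle⟩ = 0 := rfl
    have ha : (smT n (k+1)).a ⟨(j : ℕ), hjle⟩ = avec n (j : ℕ) := rfl
    rw [hb, ha, add_zero] at hle
    exact hle

lemma repl_congr {m : ℕ} {F F' : (Fin n → ℝ) → ℝ} (h : RepL n m F)
    (he : ∀ x, F x = F' x) : RepL n m F' := by
  obtain ⟨L, h1, h2⟩ := h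
  exact ⟨L, h1, fun x => (he x) ▸ h2 x⟩

lemma repl_mono {m m' : ℕ} {F : (Fin n → ℝ) → ℝ} (h : RepL n m F) (hm : m ≤ m') :
    RepL n m' F := by
  obtain ⟨L, h1, h2⟩ := h
  exact ⟨L, fun τ hτ => le_trans (h1 τ hτ) hm, h2⟩

lemma smT1_eval (h0 : 0 < n) (x : Fin n → ℝ) :
    (smT n 1).eval x = max 0 (x ⟨0, h0⟩) := by
  rw [smT_eval]
  apply le_antisymm
  · apply Finset.sup'_le
    intro i _
    rcases i with ⟨iv, hiv⟩
    interval_cases iv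
    · rw [dot_avec_zero]; exact le_max_left _ _
    · rw [show ((⟨1, hiv⟩ : Fin 2) : ℕ) = 0 + 1 from rfl, dot_avec_succ 0 h0]
      exact le_max_right _ _
  · apply max_le
    · have := Finset.le_sup' (fun i : Fin 2 => dot (avec n (i : ℕ)) x)
        (Finset.mem_univ (0 : Fin 2))
      rw [show ((0 : Fin 2) : ℕ) = 0 from rfl, dot_avec_zero] at this
      exact this
    · have := Finset.le_sup' (fun i : Fin 2 => dot (avec n (i : ℕ)) x)
        (Finset.mem_univ (1 : Fin 2))
      rw [show ((1 : Fin 2) : ℕ) = 0 + 1 from rfl, dot_avec_succ 0 h0] at this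
      exact this

lemma unitv_self (k : ℕ) (hk : k < n) : unitv n k ⟨k, hk⟩ = 1 := by simp [unitv]

lemma base_case (h0 : 0 < n) : ¬ RepL n 1 ((smT n 1).eval) := by
  rintro ⟨L, hcard, hsum⟩
  set u := unitv n 0 with hu
  -- every term in L is affine, so the E-functional vanishes
  have hterm : ∀ τ ∈ L, τ.eval u + τ.eval (-u) - 2 * τ.eval 0 = 0 := by
    intro τ hτ
    have hc1 : τ.S.card = 1 := le_antisymm (hcard τ hτ) (Finset.card_pos.2 τ.hS)
    obtain ⟨i0, hi0⟩ := Finset.card_eq_one.1 hc1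
    have he : ∀ x, τ.eval x = τ.lam * (dot (τ.a i0) x + τ.b i0) := by
      intro x
      unfold Term.eval
      congr 1
      rw [Finset.sup'_congr τ.hS hi0 (fun _ _ => rfl), Finset.sup'_singleton]
    rw [he, he, he, dot_neg, dot_zero]
    ring
  have hL : ∀ L' : List (Term n), (∀ τ ∈ L', τ.eval u + τ.eval (-u) - 2 * τ.eval 0 = 0) →
      lsum L' u + lsum L' (-u) - 2 * lsum L' 0 = 0 := by
    intro L' h
    induction L' with
    | nil => simp
    | cons τ L' ih =>
        have h1 := h τ List.mem_cons_self
        have h2 := ih (fun σ hσ => h σ (List.mem_cons_of_mem _ hσ))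
        simp only [lsum_cons]
        linarith
  have hzero := hL L hterm
  rw [← hsum u, ← hsum (-u), ← hsum 0] at hzero
  rw [smT1_eval h0, smT1_eval h0, smT1_eval h0] at hzero
  have h1 : u ⟨0, h0⟩ = 1 := unitv_self 0 h0
  have h2 : (-u) ⟨0, h0⟩ = -1 := by rw [Pi.neg_apply, h1]
  have h3 : (0 : Fin n → ℝ) ⟨0, h0⟩ = 0 := rfl
  rw [h1, h2, h3] at hzero
  norm_num at hzero

lemma chain : ∀ k : ℕ, 1 ≤ k → k + 1 ≤ n → ¬ RepL n k ((smT n k).eval) := by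
  intro k
  induction k with
  | zero => intro h; omega
  | succ j ih =>
      intro h1 hn hrep
      rcases Nat.eq_zero_or_pos j with hj | hj
      · subst hj
        exact base_case (by omega) hrep
      · have hstep := step (j+1) (smT n (j+1)) rfl (unitv n j) hrep
        have hjn : j < n := by omega
        rw [smT_top (j+1) j rfl hjn] at hstep
        simp only [Finset.card_singleton, Nat.add_sub_cancel] at hstep
        rw [Nat.max_eq_left hj] at hstep
        exact ih (by omega) (by omega) (repl_congr hstep (smT_bot_eval j hjn))


lemma dot_add_left (a a' x : Fin n → ℝ) : dot (a + a') x = dot a x + dot a' x := by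
  unfold dot
  rw [← Finset.sum_add_distrib]
  refine Finset.sum_congr rfl fun t _ => ?_
  simp; ring


/-- the pieces of the witness function -/
noncomputable def aF (n : ℕ) (i : Fin (n + 2)) : Fin n → ℝ :=
  if (i : ℕ) < n then avec n (i : ℕ)
  else if (i : ℕ) = n then unitv n (n - 3) + unitv n (n - 1)
  else unitv n (n - 2) + unitv n (n - 1)

@[reducible]
noncomputable def fT (n : ℕ) : Term n :=
  ⟨n + 2, Finset.univ, Finset.univ_nonempty, aF n, 0, 1⟩

lemma unitv_apply (k j : ℕ) (hj : j < n) :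
    unitv n k ⟨j, hj⟩ = if j = k then 1 else 0 := rfl

lemma dot_aF_c (hn : 3 ≤ n) (i : Fin (n + 2)) :
    dot (aF n i) (unitv n (n - 1)) = if (i : ℕ) < n then 0 else 1 := by
  have h1 : n - 1 < n := by omega
  have h3 : n - 3 < n := by omega
  have h2 : n - 2 < n := by omega
  unfold aF
  by_cases hi : (i : ℕ) < n
  · rw [if_pos hi, if_pos hi, dot_avec_unitv _ _ h1]
    have : (i : ℕ) ≠ n - 1 + 1 := by omega
    simp [this]
  · rw [if_neg hi, if_neg hi]
    by_cases hi2 : (i : ℕ) = n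
    · rw [if_pos hi2, dot_add_left, dot_unitv _ h3, dot_unitv _ h1,
        unitv_apply, unitv_apply]
      rw [if_neg (by omega : ¬ (n - 3 = n - 1)), if_pos rfl]
      norm_num
    · rw [if_neg hi2, dot_add_left, dot_unitv _ h2, dot_unitv _ h1,
        unitv_apply, unitv_apply]
      rw [if_neg (by omega : ¬ (n - 2 = n - 1)), if_pos rfl]
      norm_num

lemma fT_M (hn : 3 ≤ n) : (fT n).M (unitv n (n - 1)) = 1 := by
  unfold Term.M fT
  simp only []
  apply le_antisymm
  · apply Finset.sup'_le
    intro i _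
    rw [dot_aF_c hn]
    split <;> norm_num
  · have hmem : (⟨n, by omega⟩ : Fin (n + 2)) ∈ Finset.univ := Finset.mem_univ _
    have := Finset.le_sup' (fun i : Fin (n+2) => dot (aF n i) (unitv n (n - 1))) hmem
    rw [dot_aF_c hn] at this
    rw [if_neg (by simp : ¬ ((⟨n, by omega⟩ : Fin (n+2)) : ℕ) < n)] at this
    exact this

lemma fT_top_card (hn : 3 ≤ n) : ((fT n).top (unitv n (n - 1))).card ≤ n - 1 := by
  have hsub : (fT n).top (unitv n (n - 1))
      ⊆ ({⟨n, by omega⟩, ⟨n + 1, by omega⟩} : Finset (Fin (n + 2))) := by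
    intro i hi
    rw [Term.mem_top, fT_M hn] at hi
    have h2 := hi.2
    rw [show (fT n).a i = aF n i from rfl, dot_aF_c hn] at h2
    by_cases hc : (i : ℕ) < n
    · rw [if_pos hc] at h2; norm_num at h2
    · have : (i : ℕ) = n ∨ (i : ℕ) = n + 1 := by
        have hlt : (i : ℕ) < n + 2 := i.isLt
        omega
      rcases this with h | h
      · exact Finset.mem_insert.2 (Or.inl (Fin.ext h))
      · exact Finset.mem_insert.2 (Or.inr (Finset.mem_singleton.2 (Fin.ext h)))
  calc ((fT n).top (unitv n (n - 1))).card ≤ _ := Finset.card_le_card hsub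
    _ ≤ 2 := Finset.card_insert_le _ _ |>.trans (by simp)
    _ ≤ n - 1 := by omega

lemma fT_M_neg (hn : 3 ≤ n) : (fT n).M (-(unitv n (n - 1))) = 0 := by
  unfold Term.M fT
  simp only []
  apply le_antisymm
  · apply Finset.sup'_le
    intro i _
    rw [dot_neg, dot_aF_c hn]
    split <;> norm_num
  · have hmem : (⟨0, by omega⟩ : Fin (n + 2)) ∈ Finset.univ := Finset.mem_univ _
    have := Finset.le_sup' (fun i : Fin (n+2) => dot (aF n i) (-(unitv n (n - 1)))) hmem
    rw [dot_neg, dot_aF_c hn] at this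
    rw [if_pos (by simp [hn]; omega : ((⟨0, by omega⟩ : Fin (n+2)) : ℕ) < n)] at this
    exact le_trans (by simp) this

lemma fT_mem_bot (hn : 3 ≤ n) (i : Fin (n + 2)) :
    i ∈ (fT n).top (-(unitv n (n - 1))) ↔ (i : ℕ) < n := by
  rw [Term.mem_top, fT_M_neg hn]
  have : (fT n).a i = aF n i := rfl
  rw [this, dot_neg, dot_aF_c hn]
  constructor
  · intro h
    by_contra hc
    have h2 := h.2
    rw [if_neg hc] at h2
    norm_num at h2
  · intro h
    exact ⟨Finset.mem_univ _, by rw [if_pos h]; norm_num⟩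

lemma fT_bot_eval (hn : 3 ≤ n) (x : Fin n → ℝ) :
    ((fT n).topT (-(unitv n (n - 1)))).eval x = (smT n (n - 1)).eval x := by
  rw [smT_eval]
  unfold Term.topT Term.eval
  simp only []
  have hlam : (fT n).lam = 1 := rfl
  rw [hlam, one_mul]
  have hsm : n - 1 + 1 = n := by omega
  apply le_antisymm
  · apply Finset.sup'_le
    intro i hi
    have hi' : (i : ℕ) < n := (fT_mem_bot hn i).1 hi
    have hile : (i : ℕ) < n - 1 + 1 := by omega
    have hmem : (⟨(i : ℕ), hile⟩ : Fin (n - 1 + 1)) ∈ Finset.univ := Finset.mem_univ _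
    have hle := Finset.le_sup' (fun j : Fin (n - 1 + 1) => dot (avec n (j : ℕ)) x) hmem
    have hb : (fT n).b i = 0 := rfl
    have ha : (fT n).a i = aF n i := rfl
    rw [Pi.zero_apply, add_zero]
    unfold aF
    rw [if_pos hi']
    exact hle
  · apply Finset.sup'_le
    intro j _
    have hjlt : (j : ℕ) < n := by
      have := j.isLt
      omega
    have hjle : (j : ℕ) < n + 2 := by omega
    have hmem : (⟨(j : ℕ), hjle⟩ : Fin (n + 2)) ∈ (fT n).top (-(unitv n (n - 1))) := by
      rw [fT_mem_bot hn]
      exact hjlt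
    have hle := Finset.le_sup'
      (fun i : Fin (n+2) => dot ((fT n).a i) x + (fT n).b i) hmem
    have hb : (fT n).b ⟨(j : ℕ), hjle⟩ = 0 := rfl
    have ha : (fT n).a ⟨(j : ℕ), hjle⟩ = aF n ⟨(j : ℕ), hjle⟩ := rfl
    rw [hb, ha, add_zero] at hle
    unfold aF at hle
    rw [if_pos (by simpa using hjlt)] at hle
    exact hle


lemma fT_eval (x : Fin n → ℝ) :
    (fT n).eval x = Finset.univ.sup' Finset.univ_nonempty
      (fun i : Fin (n + 2) => dot (aF n i) x) := by
  unfold fT Term.eval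
  simp only [one_mul]
  refine Finset.sup'_congr _ rfl fun i _ => by simp

lemma aF_dot_0 (hn : 3 ≤ n) (x : Fin n → ℝ) (h : (0:ℕ) < n + 2) :
    dot (aF n ⟨0, h⟩) x = 0 := by
  unfold aF
  rw [if_pos (show ((⟨0,h⟩ : Fin (n+2)) : ℕ) < n by simp; omega)]
  exact dot_avec_zero x

lemma aF_dot_mid (hn : 3 ≤ n) (k : ℕ) (hk : k + 1 < n) (x : Fin n → ℝ) (h : k + 1 < n + 2) :
    dot (aF n ⟨k + 1, h⟩) x = x ⟨k, by omega⟩ := by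
  unfold aF
  rw [if_pos (show ((⟨k+1,h⟩ : Fin (n+2)) : ℕ) < n from hk)]
  exact dot_avec_succ k (by omega) x

lemma aF_dot_n (hn : 3 ≤ n) (x : Fin n → ℝ) (h : n < n + 2) :
    dot (aF n ⟨n, h⟩) x = x ⟨n - 3, Nat.sub_lt (by omega) (by omega)⟩ + x ⟨n - 1, Nat.sub_lt (by omega) (by omega)⟩ := by
  unfold aF
  rw [if_neg (by simp), if_pos (by simp), dot_add_left,
    dot_unitv _ (by omega : n - 3 < n), dot_unitv _ (by omega : n - 1 < n)]

lemma aF_dot_n1 (hn : 3 ≤ n) (x : Fin n → ℝ) (h : n + 1 < n + 2) :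
    dot (aF n ⟨n + 1, h⟩) x = x ⟨n - 2, Nat.sub_lt (by omega) (by omega)⟩ + x ⟨n - 1, Nat.sub_lt (by omega) (by omega)⟩ := by
  unfold aF
  rw [if_neg (by simp), if_neg (by simp), dot_add_left,
    dot_unitv _ (by omega : n - 2 < n), dot_unitv _ (by omega : n - 1 < n)]

lemma f_eq (hn : 3 ≤ n) (x : Fin n → ℝ) :
    (fT n).eval x =
      max 0 (max
        (maxOverSet (Finset.univ.filter (fun i : Fin n => (i : ℕ) < n - 3)) (fun i => x i))
        (max (x ⟨n - 3, Nat.sub_lt (by omega) (by omega)⟩) (x ⟨n - 2, Nat.sub_lt (by omega) (by omega)⟩) + max 0 (x ⟨n - 1, Nat.sub_lt (by omega) (by omega)⟩))) := by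
  rw [fT_eval]
  set A := maxOverSet (Finset.univ.filter (fun i : Fin n => (i : ℕ) < n - 3)) (fun i => x i) with hA
  set B := max (x ⟨n - 3, by omega⟩) (x ⟨n - 2, by omega⟩) + max 0 (x ⟨n - 1, by omega⟩) with hB
  have hBge : ∀ (u : Fin n), ((u : ℕ) = n - 3 ∨ (u : ℕ) = n - 2) → x u ≤ B := by
    intro u hu
    have h1 : x u ≤ max (x ⟨n - 3, by omega⟩) (x ⟨n - 2, by omega⟩) := by
      rcases hu with hu | hu
      · exact le_trans (le_of_eq (by congr 1; exact Fin.ext hu)) (le_max_left _ _)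
      · exact le_trans (le_of_eq (by congr 1; exact Fin.ext hu)) (le_max_right _ _)
    have h2 : (0:ℝ) ≤ max 0 (x ⟨n - 1, by omega⟩) := le_max_left _ _
    rw [hB]; linarith
  apply le_antisymm
  · apply Finset.sup'_le
    intro i _
    have hlt : (i : ℕ) < n + 2 := i.isLt
    rcases Nat.lt_or_ge (i : ℕ) n with hin | hin
    · -- small pieces
      rcases Nat.eq_zero_or_pos (i : ℕ) with h0 | h0
      · have : i = ⟨0, by omega⟩ := Fin.ext h0
        rw [this, aF_dot_0 hn]
        exact le_max_left _ _
      · obtain ⟨k, hk⟩ : ∃ k, (i : ℕ) = k + 1 := ⟨(i : ℕ) - 1, by omega⟩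
        have : i = ⟨k + 1, by omega⟩ := Fin.ext hk
        rw [this, aF_dot_mid hn k (by omega)]
        rcases Nat.lt_or_ge k (n - 3) with hks | hks
        · -- in the maxOverSet part
          have hmem : (⟨k, by omega⟩ : Fin n) ∈
              Finset.univ.filter (fun i : Fin n => (i : ℕ) < n - 3) := by
            simp [hks]
          have hne : (Finset.univ.filter (fun i : Fin n => (i : ℕ) < n - 3)).Nonempty :=
            ⟨_, hmem⟩
          have : x ⟨k, by omega⟩ ≤ A := by
            rw [hA]
            unfold maxOverSet
            rw [dif_pos hne]
            exact Finset.le_sup' (fun i : Fin n => x i) hmem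
          calc x (⟨k, by omega⟩ : Fin n) ≤ A := this
            _ ≤ max A B := le_max_left _ _
            _ ≤ max 0 (max A B) := le_max_right _ _
        · -- k = n-3 or n-2
          have hk2 : k = n - 3 ∨ k = n - 2 := by omega
          have := hBge ⟨k, by omega⟩ (by simpa using hk2)
          calc x (⟨k, by omega⟩ : Fin n) ≤ B := this
            _ ≤ max A B := le_max_right _ _
            _ ≤ max 0 (max A B) := le_max_right _ _
    · -- the two sum pieces
      have h2 : (i : ℕ) = n ∨ (i : ℕ) = n + 1 := by omega
      have hxB : dot (aF n i) x ≤ B := by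
        rcases h2 with h | h
        · have : i = ⟨n, by omega⟩ := Fin.ext h
          rw [this, aF_dot_n hn x (by omega)]
          rw [hB]
          exact add_le_add (le_max_left _ _) (le_max_right _ _)
        · have : i = ⟨n + 1, by omega⟩ := Fin.ext h
          rw [this, aF_dot_n1 hn x (by omega)]
          rw [hB]
          exact add_le_add (le_max_right _ _) (le_max_right _ _)
      calc dot (aF n i) x ≤ B := hxB
        _ ≤ max A B := le_max_right _ _
        _ ≤ max 0 (max A B) := le_max_right _ _
  · -- R ≤ sup'
    have hpiece : ∀ (i : Fin (n + 2)), dot (aF n i) x ≤ Finset.univ.sup'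
        Finset.univ_nonempty (fun i : Fin (n + 2) => dot (aF n i) x) :=
      fun i => Finset.le_sup' (fun i : Fin (n+2) => dot (aF n i) x) (Finset.mem_univ i)
    apply max_le
    · have := hpiece ⟨0, by omega⟩
      rw [aF_dot_0 hn] at this
      exact this
    · apply max_le
      · -- A ≤ sup'
        rw [hA]
        unfold maxOverSet
        by_cases hne : (Finset.univ.filter (fun i : Fin n => (i : ℕ) < n - 3)).Nonempty
        · rw [dif_pos hne]
          apply Finset.sup'_le
          intro j hj
          have hjlt : (j : ℕ) < n - 3 := by
            have := Finset.mem_filter.1 hj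
            exact this.2
          have := hpiece ⟨(j : ℕ) + 1, by omega⟩
          rw [aF_dot_mid hn (j : ℕ) (by omega)] at this
          have hje : (⟨(j : ℕ), by omega⟩ : Fin n) = j := Fin.ext rfl
          rw [hje] at this
          exact this
        · rw [dif_neg hne]
          have := hpiece ⟨0, by omega⟩
          rw [aF_dot_0 hn] at this
          exact this
      · -- B ≤ sup'
        rw [hB]
        rcases max_choice (x ⟨n - 3, by omega⟩) (x ⟨n - 2, by omega⟩) with hm1 | hm1 <;>
        rcases max_choice (0:ℝ) (x ⟨n - 1, by omega⟩) with hm2 | hm2 <;>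
        rw [hm1, hm2]
        · have := hpiece ⟨n - 3 + 1, by omega⟩
          rw [aF_dot_mid hn (n - 3) (by omega)] at this
          simpa using this
        · have := hpiece ⟨n, by omega⟩
          rw [aF_dot_n hn] at this
          exact this
        · have := hpiece ⟨n - 2 + 1, by omega⟩
          rw [aF_dot_mid hn (n - 2) (by omega)] at this
          simpa using this
        · have := hpiece ⟨n + 1, by omega⟩
          rw [aF_dot_n1 hn] at this
          exact this


lemma inmax_repl (hn : 3 ≤ n) (f : (Fin n → ℝ) → ℝ) (hin : InMAX n n f)
    (hfe : ∀ x, f x = (fT n).eval x) : RepL n n ((fT n).eval) := by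
  obtain ⟨N, lam, a, b, hsum⟩ := hin
  haveI : Nonempty (Fin n) := ⟨⟨0, by omega⟩⟩
  refine ⟨(List.finRange N).map
    (fun j => ⟨n, Finset.univ, Finset.univ_nonempty, a j, b j, lam j⟩), ?_, ?_⟩
  · intro τ hτ
    obtain ⟨j, _, hj⟩ := List.mem_map.1 hτ
    rw [← hj]
    simp
  · intro x
    rw [← hfe x, hsum x]
    unfold lsum
    rw [List.map_map, Fin.sum_univ_def]
    congr 1
    apply List.map_congr_left
    intro j _
    unfold Term.eval maxOverSet
    rw [dif_pos Finset.univ_nonempty]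
    rfl

theorem main_not_inmax (hn : 3 ≤ n) (f : (Fin n → ℝ) → ℝ)
    (hf : ∀ x, f x =
      max 0 (max
        (maxOverSet (Finset.univ.filter (fun i : Fin n => (i : ℕ) < n - 3)) (fun i => x i))
        (max (x ⟨n - 3, Nat.sub_lt (by omega) (by omega)⟩) (x ⟨n - 2, Nat.sub_lt (by omega) (by omega)⟩) + max 0 (x ⟨n - 1, Nat.sub_lt (by omega) (by omega)⟩)))) :
    ¬ InMAX n n f := by
  intro hin
  have hfe : ∀ x, f x = (fT n).eval x := fun x => (hf x).trans (f_eq hn x).symm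
  have hrep : RepL n n ((fT n).eval) := inmax_repl hn f hin hfe
  have hstep := step n (fT n) rfl (unitv n (n - 1)) hrep
  have hb : max (n - 1) (((fT n).top (unitv n (n - 1))).card) = n - 1 :=
    Nat.max_eq_left (fT_top_card hn)
  rw [hb] at hstep
  have hrep2 : RepL n (n - 1) ((smT n (n - 1)).eval) :=
    repl_congr hstep (fT_bot_eval hn)
  exact chain (n - 1) (by omega) (by omega) hrep2


lemma cont_sup' {ι : Type*} (S : Finset ι) (h : S.Nonempty) (v : ι → (Fin n → ℝ) → ℝ)
    (hv : ∀ i, Continuous (v i)) : Continuous (fun x => S.sup' h (fun i => v i x)) := by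
  induction h using Finset.Nonempty.cons_induction with
  | singleton i => simpa using hv i
  | cons i s hi hs ih =>
      have : (fun x => (Finset.cons i s hi).sup' (Finset.cons_nonempty hi) (fun j => v j x))
          = fun x => max (v i x) (s.sup' hs (fun j => v j x)) := by
        funext x; rw [Finset.sup'_cons]
      rw [this]; exact (hv i).max ih

lemma cpwl_terms (N p : ℕ) (hp : 0 < p) (lam : Fin N → ℝ) (a : Fin N → Fin p → Fin n → ℝ)
    (b : Fin N → Fin p → ℝ) :
    IsCPWL (fun x => ∑ j, lam j * maxOverSet Finset.univ (fun i => (∑ t, a j i t * x t) + b j i)) := by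
  haveI : Nonempty (Fin p) := ⟨⟨0, hp⟩⟩
  have hrw : ∀ (j : Fin N) (x : Fin n → ℝ),
      maxOverSet Finset.univ (fun i : Fin p => (∑ t, a j i t * x t) + b j i)
        = Finset.univ.sup' Finset.univ_nonempty (fun i : Fin p => (∑ t, a j i t * x t) + b j i) := by
    intro j x
    unfold maxOverSet
    rw [dif_pos Finset.univ_nonempty]
  constructor
  · -- continuity
    apply continuous_finset_sum
    intro j _
    apply Continuous.mul continuous_const
    have : (fun x : Fin n → ℝ => maxOverSet Finset.univ (fun i : Fin p => (∑ t, a j i t * x t) + b j i))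
        = fun x => Finset.univ.sup' Finset.univ_nonempty
            (fun i : Fin p => (∑ t, a j i t * x t) + b j i) := by
      funext x; exact hrw j x
    rw [this]
    apply cont_sup'
    intro i
    exact (continuous_finset_sum _ (fun t _ =>
      (continuous_const.mul (continuous_apply t)))).add continuous_const
  · -- polyhedral pieces
    refine ⟨p ^ N, fun q => {x | ∀ (j : Fin N) (i : Fin p),
      (∑ t, a j i t * x t) + b j i ≤
        (∑ t, a j ((finFunctionFinEquiv.symm q) j) t * x t) + b j ((finFunctionFinEquiv.symm q) j)},
      ?_, ?_, ?_⟩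
    · -- polyhedron
      intro q
      set σ := finFunctionFinEquiv.symm q with hσ
      refine ⟨N * p, fun r t => a (finProdFinEquiv.symm r).1 (finProdFinEquiv.symm r).2 t
          - a (finProdFinEquiv.symm r).1 (σ (finProdFinEquiv.symm r).1) t,
        fun r => b (finProdFinEquiv.symm r).1 (σ (finProdFinEquiv.symm r).1)
          - b (finProdFinEquiv.symm r).1 (finProdFinEquiv.symm r).2, ?_⟩
      ext x
      simp only [Set.mem_setOf_eq]
      constructor
      · intro h r
        have := h (finProdFinEquiv.symm r).1 (finProdFinEquiv.symm r).2
        have hsum : ∑ t, (a (finProdFinEquiv.symm r).1 (finProdFinEquiv.symm r).2 t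
            - a (finProdFinEquiv.symm r).1 (σ (finProdFinEquiv.symm r).1) t) * x t
            = (∑ t, a (finProdFinEquiv.symm r).1 (finProdFinEquiv.symm r).2 t * x t)
              - ∑ t, a (finProdFinEquiv.symm r).1 (σ (finProdFinEquiv.symm r).1) t * x t := by
          rw [← Finset.sum_sub_distrib]
          exact Finset.sum_congr rfl fun t _ => by ring
        rw [hsum]
        linarith
      · intro h j i
        have := h (finProdFinEquiv (j, i))
        rw [show (finProdFinEquiv.symm (finProdFinEquiv (j, i))) = (j, i) from
          Equiv.symm_apply_apply _ _] at this
        simp only at this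
        have hsum : ∑ t, (a j i t - a j (σ j) t) * x t
            = (∑ t, a j i t * x t) - ∑ t, a j (σ j) t * x t := by
          rw [← Finset.sum_sub_distrib]
          exact Finset.sum_congr rfl fun t _ => by ring
        rw [hsum] at this
        linarith
    · -- covering
      apply Set.eq_univ_of_forall
      intro x
      have hchoice : ∀ j : Fin N, ∃ i : Fin p, ∀ i' : Fin p,
          (∑ t, a j i' t * x t) + b j i' ≤ (∑ t, a j i t * x t) + b j i := by
        intro j
        obtain ⟨i, _, hi⟩ := Finset.exists_max_image Finset.univ
          (fun i : Fin p => (∑ t, a j i t * x t) + b j i) Finset.univ_nonempty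
        exact ⟨i, fun i' => hi i' (Finset.mem_univ _)⟩
      choose σ hσ using hchoice
      refine Set.mem_iUnion.2 ⟨finFunctionFinEquiv σ, ?_⟩
      simp only [Set.mem_setOf_eq, Equiv.symm_apply_apply]
      intro j i
      exact hσ j i
    · -- affine on pieces
      intro q
      set σ := finFunctionFinEquiv.symm q with hσ
      refine ⟨fun t => ∑ j, lam j * a j (σ j) t, ∑ j, lam j * b j (σ j), ?_⟩
      intro x hx
      simp only [Set.mem_setOf_eq] at hx
      have hmax : ∀ j : Fin N, maxOverSet Finset.univ (fun i : Fin p => (∑ t, a j i t * x t) + b j i)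
          = (∑ t, a j (σ j) t * x t) + b j (σ j) := by
        intro j
        rw [hrw j x]
        apply le_antisymm
        · exact Finset.sup'_le _ _ fun i _ => hx j i
        · exact Finset.le_sup' (fun i : Fin p => (∑ t, a j i t * x t) + b j i) (Finset.mem_univ (σ j))
      calc ∑ j, lam j * maxOverSet Finset.univ (fun i : Fin p => (∑ t, a j i t * x t) + b j i)
          = ∑ j, lam j * ((∑ t, a j (σ j) t * x t) + b j (σ j)) := by
            exact Finset.sum_congr rfl fun j _ => by rw [hmax j]
        _ = (∑ j, ∑ t, lam j * a j (σ j) t * x t) + ∑ j, lam j * b j (σ j) := by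
            rw [← Finset.sum_add_distrib]
            refine Finset.sum_congr rfl fun j _ => ?_
            rw [mul_add, Finset.mul_sum]
            congr 1
            exact Finset.sum_congr rfl fun t _ => by ring
        _ = (∑ t, (∑ j, lam j * a j (σ j) t) * x t) + ∑ j, lam j * b j (σ j) := by
            congr 1
            rw [Finset.sum_comm]
            exact Finset.sum_congr rfl fun t _ => by rw [Finset.sum_mul]

end M11

/-- for every `n ≥ 3`, the function
`f(x) = max{0, x₁, …, x_{n−3}, max{x_{n−2}, x_{n−1}} + max{0, xₙ}}` is not contained in
`MAX_n(n)`; in particular `MAX_n(n)` is a strict subset of `CPWL_n`.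
(Coordinates are 0-indexed: `x_i` of the paper is `x ⟨i-1⟩`.) -/
theorem not_in_max_n (n : ℕ) (hn : 3 ≤ n) (f : (Fin n → ℝ) → ℝ)
    (hf : ∀ x, f x =
      max 0 (max
        (maxOverSet (Finset.univ.filter (fun i : Fin n => (i : ℕ) < n - 3)) (fun i => x i))
        (max (x ⟨n - 3, by omega⟩) (x ⟨n - 2, by omega⟩) + max 0 (x ⟨n - 1, by omega⟩)))) :
    ¬ InMAX n n f ∧ IsCPWL f ∧ ∀ g : (Fin n → ℝ) → ℝ, InMAX n n g → IsCPWL g := by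
  refine ⟨M11.main_not_inmax hn f hf, ?_, ?_⟩
  · have hfe : ∀ x, f x = (M11.fT n).eval x := fun x => (hf x).trans (M11.f_eq hn x).symm
    have hfun : f = (fun x => ∑ j : Fin 1, (fun _ : Fin 1 => (1:ℝ)) j *
        maxOverSet Finset.univ (fun i : Fin (n+2) =>
          (∑ t, M11.aF n i t * x t) + (fun _ : Fin (n+2) => (0:ℝ)) i)) := by
      funext x
      rw [hfe x]
      rw [Fin.sum_univ_one]
      unfold M11.Term.eval M11.fT maxOverSet M11.dot
      rw [dif_pos Finset.univ_nonempty]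
      norm_num
    rw [hfun]
    exact M11.cpwl_terms 1 (n+2) (by omega) _ _ _
  · intro g hg
    obtain ⟨N, lam, a, b, hsum⟩ := hg
    have hfun : g = fun x => ∑ j, lam j * maxOverSet Finset.univ
        (fun i => (∑ t, a j i t * x t) + b j i) := funext hsum
    rw [hfun]
    exact M11.cpwl_terms N n (by omega) lam a b
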